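/- Let h_i ∈ C²(ℝ,ℝ) with |h_i'| ≤ D_h and |h_i''| ≤ M_h uniformly, and let h : ℓ² → L₂(ℓ²) be the diagonal Nemytskii operator. Then for all u, v, w, z ∈ ℓ²: ‖h(u) - h(v) - (h(w) - h(z))‖_{L₂(ℓ²)} ≤ √2 D_h ‖u - v - (w - z)‖ + 2 M_h ‖u - w‖ (‖u - v‖ + ‖w - z‖). -/

import Mathlib

set_option maxHeartbeats 1000000

open Set

private lemma sqrt_add_le' {x y : ℝ} (hx : 0 ≤ x) (hy : 0 ≤ y) :
    Real.sqrt (x + y) ≤ Real.sqrt x + Real.sqrt y := by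
  have h : x + y ≤ (Real.sqrt x + Real.sqrt y) ^ 2 := by
    have hx' := Real.sq_sqrt hx
    have hy' := Real.sq_sqrt hy
    nlinarith [Real.sqrt_nonneg x, Real.sqrt_nonneg y]
  calc Real.sqrt (x + y) ≤ Real.sqrt ((Real.sqrt x + Real.sqrt y) ^ 2) := Real.sqrt_le_sqrt h
    _ = Real.sqrt x + Real.sqrt y := Real.sqrt_sq (by positivity)

private lemma scalarNR (f : ℝ → ℝ) (Dh Mh : ℝ)
    (hf : ContDiff ℝ 2 f) (h1 : ∀ ζ : ℝ, |deriv f ζ| ≤ Dh)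
    (h2 : ∀ ζ : ℝ, |deriv (deriv f) ζ| ≤ Mh) (a b c d : ℝ) :
    |f a - f b - (f c - f d)| ≤
      Dh * |a - b - (c - d)| + Mh * |a - c| * (|a - b| + |c - d|) := by
  have hfd : Differentiable ℝ f := hf.differentiable (by norm_num)
  have hfc1 : ContDiff ℝ 1 (deriv f) := by
    have := (contDiff_succ_iff_deriv (n := 1)).mp (by exact_mod_cast hf)
    exact this.2.2
  have hfd' : Differentiable ℝ (deriv f) := hfc1.differentiable one_ne_zero
  have lip : ∀ x y : ℝ, |deriv f x - deriv f y| ≤ Mh * |x - y| := by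
    intro x y
    have := convex_univ.norm_image_sub_le_of_norm_deriv_le (f := deriv f)
      (fun z _ => hfd' z) (fun z _ => h2 z) (Set.mem_univ y) (Set.mem_univ x)
    simpa [Real.norm_eq_abs] using this
  set g : ℝ → ℝ := fun t => f (c + t * (a - c)) - f (d + t * (b - d)) with hg
  set g' : ℝ → ℝ := fun t =>
    deriv f (c + t * (a - c)) * (a - c) - deriv f (d + t * (b - d)) * (b - d) with hg'
  have hderg : ∀ t : ℝ, HasDerivAt g (g' t) t := by
    intro t
    have h1' : HasDerivAt (fun t : ℝ => c + t * (a - c)) (a - c) t := by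
      simpa using ((hasDerivAt_id t).mul_const (a - c)).const_add c
    have h2' : HasDerivAt (fun t : ℝ => d + t * (b - d)) (b - d) t := by
      simpa using ((hasDerivAt_id t).mul_const (b - d)).const_add d
    exact ((hfd _).hasDerivAt.comp t h1').sub ((hfd _).hasDerivAt.comp t h2')
  set C : ℝ := Dh * |a - b - (c - d)| + Mh * |a - c| * (|a - b| + |c - d|) with hC
  have bound : ∀ t ∈ Ico (0:ℝ) 1, ‖g' t‖ ≤ C := by
    intro t ht
    obtain ⟨ht0, ht1⟩ := ht
    set θ := c + t * (a - c)
    set η := d + t * (b - d)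
    have key : g' t = deriv f η * (a - b - (c - d)) + (deriv f θ - deriv f η) * (a - c) := by
      simp only [hg']; ring
    have hθη : θ - η = (1 - t) * (c - d) + t * (a - b) := by simp only [θ, η]; ring
    have hθηabs : |θ - η| ≤ |a - b| + |c - d| := by
      rw [hθη]
      calc |(1 - t) * (c - d) + t * (a - b)| ≤ |(1-t)*(c-d)| + |t*(a-b)| := abs_add_le _ _
        _ = (1-t)*|c-d| + t*|a-b| := by
            rw [abs_mul, abs_mul, abs_of_nonneg (by linarith), abs_of_nonneg ht0]
        _ ≤ |a - b| + |c - d| := by nlinarith [abs_nonneg (c-d), abs_nonneg (a-b)]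
    have hlip := lip θ η
    have hMθη : |deriv f θ - deriv f η| ≤ Mh * (|a - b| + |c - d|) := by
      have hMh : 0 ≤ Mh := le_trans (abs_nonneg _) (h2 0)
      calc |deriv f θ - deriv f η| ≤ Mh * |θ - η| := hlip
        _ ≤ Mh * (|a - b| + |c - d|) := by nlinarith
    rw [key, Real.norm_eq_abs]
    calc |deriv f η * (a - b - (c - d)) + (deriv f θ - deriv f η) * (a - c)|
        ≤ |deriv f η * (a - b - (c - d))| + |(deriv f θ - deriv f η) * (a - c)| := abs_add_le _ _
      _ = |deriv f η| * |a - b - (c - d)| + |deriv f θ - deriv f η| * |a - c| := by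
            rw [abs_mul, abs_mul]
      _ ≤ Dh * |a - b - (c - d)| + Mh * (|a - b| + |c - d|) * |a - c| := by
            have hd := mul_le_mul_of_nonneg_right (h1 η) (abs_nonneg (a - b - (c - d)))
            have hm := mul_le_mul_of_nonneg_right hMθη (abs_nonneg (a - c))
            linarith
      _ = C := by rw [hC]; ring
  have hmain := norm_image_sub_le_of_norm_deriv_le_segment'
    (f := g) (f' := g') (a := (0:ℝ)) (b := 1)
    (fun x _ => (hderg x).hasDerivWithinAt) bound 1 (by norm_num)
  have hg1 : g 1 = f a - f b := by simp [hg]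
  have hg0 : g 0 = f c - f d := by simp [hg]
  rw [hg1, hg0] at hmain
  simpa [Real.norm_eq_abs] using hmain

theorem stmt10 (h : ℤ → ℝ → ℝ) (Dh Mh : ℝ) (hDh : 0 ≤ Dh) (hMh : 0 ≤ Mh)
    (hC2 : ∀ i : ℤ, ContDiff ℝ 2 (h i))
    (hder : ∀ i : ℤ, ∀ ζ : ℝ, |deriv (h i) ζ| ≤ Dh)
    (hder2 : ∀ i : ℤ, ∀ ζ : ℝ, |deriv (deriv (h i)) ζ| ≤ Mh) :
    ∀ u v w z : lp (fun _ : ℤ => ℝ) 2,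
      Real.sqrt (∑' i : ℤ, (h i (u i) - h i (v i) - (h i (w i) - h i (z i))) ^ 2) ≤
        Real.sqrt 2 * Dh * ‖u - v - (w - z)‖ + 2 * Mh * ‖u - w‖ * (‖u - v‖ + ‖w - z‖) := by
  intro u v w z
  -- squared-sum identity for lp 2 elements
  have hp2 : (0:ℝ) < (2 : ENNReal).toReal := by norm_num
  have sumsq : ∀ f : lp (fun _ : ℤ => ℝ) 2, Summable (fun i : ℤ => (f i) ^ 2) := by
    intro f
    have := (lp.memℓp f).summable hp2
    refine this.congr fun i => ?_
    rw [ENNReal.toReal_ofNat, Real.rpow_two, Real.norm_eq_abs, sq_abs]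
  have normsq : ∀ f : lp (fun _ : ℤ => ℝ) 2, (∑' i : ℤ, (f i) ^ 2) = ‖f‖ ^ 2 := by
    intro f
    have := lp.norm_rpow_eq_tsum hp2 f
    rw [ENNReal.toReal_ofNat] at this
    simp only [Real.rpow_two, Real.norm_eq_abs, sq_abs] at this
    rw [this]
  set Δ := u - v - (w - z)
  set α := u - w
  set β := u - v
  set γ := w - z
  have coeΔ : ∀ i : ℤ, Δ i = u i - v i - (w i - z i) := by
    intro i; simp [Δ, lp.coeFn_sub, Pi.sub_apply]
  have coeα : ∀ i : ℤ, α i = u i - w i := by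
    intro i; simp [α, lp.coeFn_sub, Pi.sub_apply]
  have coeβ : ∀ i : ℤ, β i = u i - v i := by
    intro i; simp [β, lp.coeFn_sub, Pi.sub_apply]
  have coeγ : ∀ i : ℤ, γ i = w i - z i := by
    intro i; simp [γ, lp.coeFn_sub, Pi.sub_apply]
  set F : ℤ → ℝ := fun i => h i (u i) - h i (v i) - (h i (w i) - h i (z i)) with hF
  -- pointwise bound
  have ptw : ∀ i : ℤ, F i ^ 2 ≤
      2 * Dh^2 * (Δ i)^2 + 4 * Mh^2 * ‖α‖^2 * ((β i)^2 + (γ i)^2) := by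
    intro i
    have hNR := scalarNR (h i) Dh Mh (hC2 i) (hder i) (hder2 i) (u i) (v i) (w i) (z i)
    have hαle : |α i| ≤ ‖α‖ := by
      have := lp.norm_apply_le_norm (two_ne_zero) α i
      simpa [Real.norm_eq_abs] using this
    rw [coeΔ i, coeα i, coeβ i, coeγ i] at *
    have h1 : F i ^ 2 = |F i| ^ 2 := (sq_abs _).symm
    rw [h1]
    have h2 : |F i| ≤ Dh * |u i - v i - (w i - z i)| +
        Mh * |u i - w i| * (|u i - v i| + |w i - z i|) := hNR
    have e1 : |u i - v i - (w i - z i)| ^ 2 = (u i - v i - (w i - z i)) ^ 2 := sq_abs _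
    have e2 : |u i - v i| ^ 2 = (u i - v i) ^ 2 := sq_abs _
    have e3 : |w i - z i| ^ 2 = (w i - z i) ^ 2 := sq_abs _
    have e4 : |u i - w i| ^ 2 = (u i - w i) ^ 2 := sq_abs _
    set X := Dh * |u i - v i - (w i - z i)| with hX
    set Y := Mh * |u i - w i| * (|u i - v i| + |w i - z i|) with hY
    have hX0 : 0 ≤ X := by positivity
    have hY0 : 0 ≤ Y := by positivity
    have hsq : |F i| ^ 2 ≤ 2 * X ^ 2 + 2 * Y ^ 2 := by
      nlinarith [sq_nonneg (X - Y), abs_nonneg (F i)]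
    have hX2 : X ^ 2 = Dh ^ 2 * (u i - v i - (w i - z i)) ^ 2 := by
      rw [hX, mul_pow, sq_abs]
    have hA : |u i - w i| ^ 2 ≤ ‖α‖ ^ 2 := by
      have := abs_nonneg (u i - w i); nlinarith
    have hB : (|u i - v i| + |w i - z i|) ^ 2 ≤
        2 * ((u i - v i) ^ 2 + (w i - z i) ^ 2) := by
      nlinarith [sq_nonneg (|u i - v i| - |w i - z i|)]
    have hY2 : Y ^ 2 ≤ Mh ^ 2 * (‖α‖ ^ 2 * (2 * ((u i - v i) ^ 2 + (w i - z i) ^ 2))) := by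
      have hYe : Y ^ 2 = Mh ^ 2 * (|u i - w i| ^ 2 * (|u i - v i| + |w i - z i|) ^ 2) := by
        rw [hY]; ring
      rw [hYe]
      have := mul_le_mul hA hB (by positivity) (by positivity)
      nlinarith [sq_nonneg Mh]
    linarith
  -- summability of RHS
  have sRHS : Summable (fun i : ℤ =>
      2 * Dh^2 * (Δ i)^2 + 4 * Mh^2 * ‖α‖^2 * ((β i)^2 + (γ i)^2)) := by
    exact (((sumsq Δ).mul_left _).add ((((sumsq β).add (sumsq γ)).mul_left _)))
  have sLHS : Summable (fun i : ℤ => F i ^ 2) := by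
    refine Summable.of_nonneg_of_le (fun i => sq_nonneg _) ptw sRHS
  have tsum_le : (∑' i : ℤ, F i ^ 2) ≤
      2 * Dh^2 * ‖Δ‖^2 + 4 * Mh^2 * ‖α‖^2 * (‖β‖^2 + ‖γ‖^2) := by
    calc (∑' i : ℤ, F i ^ 2)
        ≤ ∑' i : ℤ, (2 * Dh^2 * (Δ i)^2 + 4 * Mh^2 * ‖α‖^2 * ((β i)^2 + (γ i)^2)) :=
          Summable.tsum_le_tsum ptw sLHS sRHS
      _ = 2 * Dh^2 * (∑' i : ℤ, (Δ i)^2) +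
          4 * Mh^2 * ‖α‖^2 * ((∑' i : ℤ, (β i)^2) + (∑' i : ℤ, (γ i)^2)) := by
          rw [Summable.tsum_add ((sumsq Δ).mul_left _) (((sumsq β).add (sumsq γ)).mul_left _),
            tsum_mul_left, tsum_mul_left, Summable.tsum_add (sumsq β) (sumsq γ)]
      _ = 2 * Dh^2 * ‖Δ‖^2 + 4 * Mh^2 * ‖α‖^2 * (‖β‖^2 + ‖γ‖^2) := by
          rw [normsq Δ, normsq β, normsq γ]
  -- conclude with sqrt estimates
  have step1 : Real.sqrt (∑' i : ℤ, F i ^ 2) ≤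
      Real.sqrt (2 * Dh^2 * ‖Δ‖^2 + 4 * Mh^2 * ‖α‖^2 * (‖β‖^2 + ‖γ‖^2)) :=
    Real.sqrt_le_sqrt tsum_le
  have step2 : Real.sqrt (2 * Dh^2 * ‖Δ‖^2 + 4 * Mh^2 * ‖α‖^2 * (‖β‖^2 + ‖γ‖^2)) ≤
      Real.sqrt (2 * Dh^2 * ‖Δ‖^2) + Real.sqrt (4 * Mh^2 * ‖α‖^2 * (‖β‖^2 + ‖γ‖^2)) :=
    sqrt_add_le' (by positivity) (by positivity)
  have e1 : Real.sqrt (2 * Dh^2 * ‖Δ‖^2) = Real.sqrt 2 * Dh * ‖Δ‖ := by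
    rw [show 2 * Dh^2 * ‖Δ‖^2 = (Real.sqrt 2 * Dh * ‖Δ‖)^2 by
      rw [mul_pow, mul_pow, Real.sq_sqrt (by norm_num)]]
    exact Real.sqrt_sq (by positivity)
  have e2 : Real.sqrt (4 * Mh^2 * ‖α‖^2 * (‖β‖^2 + ‖γ‖^2)) ≤
      2 * Mh * ‖α‖ * (‖β‖ + ‖γ‖) := by
    have hle : 4 * Mh^2 * ‖α‖^2 * (‖β‖^2 + ‖γ‖^2) ≤ (2 * Mh * ‖α‖ * (‖β‖ + ‖γ‖))^2 := by
      nlinarith [norm_nonneg β, norm_nonneg γ, mul_nonneg hMh (norm_nonneg α),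
        mul_nonneg (norm_nonneg β) (norm_nonneg γ), sq_nonneg (Mh * ‖α‖)]
    calc Real.sqrt (4 * Mh^2 * ‖α‖^2 * (‖β‖^2 + ‖γ‖^2))
        ≤ Real.sqrt ((2 * Mh * ‖α‖ * (‖β‖ + ‖γ‖))^2) := Real.sqrt_le_sqrt hle
      _ = 2 * Mh * ‖α‖ * (‖β‖ + ‖γ‖) := Real.sqrt_sq (by positivity)
  calc Real.sqrt (∑' i : ℤ, F i ^ 2)
      ≤ Real.sqrt (2 * Dh^2 * ‖Δ‖^2) + Real.sqrt (4 * Mh^2 * ‖α‖^2 * (‖β‖^2 + ‖γ‖^2)) :=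
        step1.trans step2
    _ ≤ Real.sqrt 2 * Dh * ‖Δ‖ + 2 * Mh * ‖α‖ * (‖β‖ + ‖γ‖) := by rw [e1]; gcongr
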